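/- Let n ≥ τ ≥ 1, e = n(n−1)/2, and let v = (V^{(1)},…,V^{(τ)}) ∈ ℂ^{nτ} be such that the nτ complex numbers {V_i^{(k)} : 1 ≤ i ≤ n, 1 ≤ k ≤ τ} are algebraically independent over ℚ. Then the stacked voltage coefficient matrix A(v) ∈ ℂ^{nτ×e} has rank (over ℂ) equal to nτ − τ(τ+1)/2. -/

import Mathlib

open Matrix BigOperators

/-- Edges of the complete graph on `Fin n`: ordered pairs `(i, j)` with `i < j`. -/
abbrev CEdge (n : ℕ) := {p : Fin n × Fin n // p.1 < p.2}

/-- Incidence matrix of the complete graph on `Fin n`, each edge `(i, j)` (with `i < j`)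
oriented from `i` to `j`:  `H i l = 1` if edge `l` leaves node `i`, `-1` if it enters `i`,
and `0` otherwise. -/
def incid (F : Type*) [Field F] (n : ℕ) : Matrix (Fin n) (CEdge n) F :=
  Matrix.of fun i l => if i = l.val.1 then 1 else if i = l.val.2 then -1 else 0

/-- Voltage coefficient matrix `Ã(V) = H ⬝ diag(Hᵀ V)`. -/
def Atilde {F : Type*} [Field F] {n : ℕ} (V : Fin n → F) : Matrix (Fin n) (CEdge n) F :=
  incid F n * Matrix.diagonal ((incid F n)ᵀ *ᵥ V)

/-- Stacked voltage coefficient matrix `A(v)` for `τ` measurements `v 1, …, v τ`: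
the row indexed by `(k, i)` is the `i`-th row of `Ã(V^(k))`. -/
def Astack {F : Type*} [Field F] {n τ : ℕ} (v : Fin τ → Fin n → F) :
    Matrix (Fin τ × Fin n) (CEdge n) F :=
  Matrix.of fun p l => Atilde (v p.1) p.2 l

/-- Rigidity matrix of the complete graph at the configuration `x = (x 1, …, x n)`,
`x i ∈ F^τ`: the row indexed by edge `(i, j)`, `i < j`, has the entries of `(x i − x j)ᵀ`
in the `τ` columns of node `i`, the entries of `(x j − x i)ᵀ` in the `τ` columns of node `j`,
and zeros elsewhere. -/
def rigidityM {F : Type*} [Field F] {n τ : ℕ} (x : Fin n → Fin τ → F) :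
    Matrix (CEdge n) (Fin n × Fin τ) F :=
  Matrix.of fun l p =>
    if p.1 = l.val.1 then x l.val.1 p.2 - x l.val.2 p.2
    else if p.1 = l.val.2 then x l.val.2 p.2 - x l.val.1 p.2
    else 0

namespace Stmt8Aux

open Module Submodule Function

noncomputable section

variable {n : ℕ}

/-- The vector `e_a - e_b` associated to the edge `l = (a,b)`. -/
def ev (l : CEdge n) : Fin n → ℂ :=
  fun i => if i = l.val.1 then 1 else if i = l.val.2 then -1 else 0

lemma sum_ev_mul (l : CEdge n) (f : Fin n → ℂ) :
    ∑ j, ev l j * f j = f l.val.1 - f l.val.2 := by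
  obtain ⟨⟨a, b⟩, hab⟩ := l
  have hne : a ≠ b := ne_of_lt hab
  have key : ∀ j, ev (⟨(a, b), hab⟩ : CEdge n) j * f j
      = (if j = a then f a else 0) + (if j = b then -f b else 0) := by
    intro j
    simp only [ev]
    by_cases h1 : j = a
    · subst h1; simp [hne]
    · by_cases h2 : j = b
      · subst h2; simp [h1]
      · simp [h1, h2]
  rw [Finset.sum_congr rfl (fun j _ => key j), Finset.sum_add_distrib,
    Finset.sum_ite_eq' Finset.univ a (fun _ => f a),
    Finset.sum_ite_eq' Finset.univ b (fun _ => -f b)]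
  simp [sub_eq_add_neg]

lemma sum_ev (l : CEdge n) : ∑ j, ev l j = 0 := by
  have := sum_ev_mul l (fun _ => (1 : ℂ))
  simpa using this

/-- The rank-one symmetric matrix `(e_a - e_b)(e_a - e_b)ᵀ`. -/
def Msym (l : CEdge n) : Matrix (Fin n) (Fin n) ℂ :=
  Matrix.of fun i j => ev l i * ev l j

lemma ev_mul_ev_eq_zero {l l' : CEdge n} (hne : l' ≠ l) :
    ev l' l.val.1 * ev l' l.val.2 = 0 := by
  obtain ⟨⟨a, b⟩, hab⟩ := l
  obtain ⟨⟨a', b'⟩, hab'⟩ := l'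
  have h1 : (a : ℕ) < b := hab
  have h2 : (a' : ℕ) < b' := hab'
  have hne' : ¬((a' : ℕ) = a ∧ (b' : ℕ) = b) := by
    simpa [Subtype.ext_iff, Prod.ext_iff, Fin.ext_iff] using hne
  simp only [ev]
  split_ifs with g1 g2 g3 g4 g5 g6 g7 g8 <;> try ring
  all_goals
    exfalso
    simp only [Fin.ext_iff] at *
    omega

lemma msym_li : LinearIndependent ℂ (Msym (n := n)) := by
  rw [Fintype.linearIndependent_iff]
  intro c hc l
  have h : ∑ x : CEdge n, c x * (ev x l.val.1 * ev x l.val.2) = 0 := by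
    have := congrFun (congrFun hc l.val.1) l.val.2
    simpa [Msym, Matrix.sum_apply] using this
  rw [Finset.sum_eq_single l] at h
  · obtain ⟨⟨a, b⟩, hab⟩ := l
    have hne : a ≠ b := ne_of_lt hab
    have hv : ev (⟨(a, b), hab⟩ : CEdge n) a * ev (⟨(a, b), hab⟩ : CEdge n) b = -1 := by
      simp [ev, hne, Ne.symm hne]
    rw [hv] at h
    simpa using h
  · intro l' _ hne
    rw [ev_mul_ev_eq_zero hne, mul_zero]
  · simp

/-- Symmetric matrices with zero row sums. -/
def U (n : ℕ) : Submodule ℂ (Matrix (Fin n) (Fin n) ℂ) where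
  carrier := {S | Sᵀ = S ∧ S *ᵥ (fun _ => 1) = 0}
  add_mem' := by
    rintro S T ⟨hS1, hS2⟩ ⟨hT1, hT2⟩
    exact ⟨by rw [Matrix.transpose_add, hS1, hT1],
      by rw [Matrix.add_mulVec, hS2, hT2, add_zero]⟩
  zero_mem' := ⟨Matrix.transpose_zero, Matrix.zero_mulVec _⟩
  smul_mem' := by
    rintro c S ⟨hS1, hS2⟩
    exact ⟨by rw [Matrix.transpose_smul, hS1],
      by rw [Matrix.smul_mulVec, hS2, smul_zero]⟩

lemma msym_mem_U (l : CEdge n) : Msym l ∈ U n := by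
  constructor
  · ext i j
    simp [Msym, mul_comm]
  · funext i
    have : ∀ j, Msym l i j * 1 = ev l i * ev l j := by intro j; simp [Msym]
    simp only [Matrix.mulVec, dotProduct]
    rw [Finset.sum_congr rfl (fun j _ => this j), ← Finset.mul_sum, sum_ev, mul_zero]
    rfl

/-- Equivalence of edges with a sigma type, to count them. -/
def edgeEquiv (n : ℕ) : CEdge n ≃ Σ j : Fin n, Fin j.val where
  toFun l := ⟨l.val.2, ⟨l.val.1.val, l.2⟩⟩
  invFun s := ⟨(⟨s.2.val, s.2.isLt.trans s.1.isLt⟩, s.1), s.2.isLt⟩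
  left_inv := by rintro ⟨⟨a, b⟩, h⟩; rfl
  right_inv := by rintro ⟨j, i⟩; rfl

lemma card_cedge (n : ℕ) : 2 * Fintype.card (CEdge n) = n * (n - 1) := by
  rw [Fintype.card_congr (edgeEquiv n)]
  rw [Fintype.card_sigma]
  simp only [Fintype.card_fin]
  rw [Fin.sum_univ_eq_sum_range (fun i => i) n]
  rw [mul_comm]
  exact Finset.sum_range_id_mul_two n

/-- Equivalence for counting pairs `(i,j)` with `i ≤ j`. -/
def leEquiv (m : ℕ) : {p : Fin m × Fin m // p.1 ≤ p.2} ≃ Σ j : Fin m, Fin (j.val + 1) where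
  toFun l := ⟨l.val.2, ⟨l.val.1.val, Nat.lt_succ_of_le l.2⟩⟩
  invFun s := ⟨(⟨s.2.val, Nat.lt_of_le_of_lt (Nat.lt_succ_iff.mp s.2.isLt) s.1.isLt⟩, s.1),
    Nat.lt_succ_iff.mp s.2.isLt⟩
  left_inv := by rintro ⟨⟨a, b⟩, h⟩; rfl
  right_inv := by rintro ⟨j, i⟩; rfl

lemma card_le_pairs (m : ℕ) :
    2 * Fintype.card {p : Fin m × Fin m // p.1 ≤ p.2} = m * (m + 1) := by
  rw [Fintype.card_congr (leEquiv m)]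
  rw [Fintype.card_sigma]
  simp only [Fintype.card_fin]
  rw [Fin.sum_univ_eq_sum_range (fun i => i + 1) m, Finset.sum_add_distrib,
    Finset.sum_const, Finset.card_range, smul_eq_mul, mul_one]
  have h := Finset.sum_range_id_mul_two m
  cases m with
  | zero => simp
  | succ k =>
    have : (k + 1) * (k + 1 - 1) = (k + 1) * k := rfl
    rw [this] at h
    nlinarith [h]

/-- Symmetric matrices. -/
def symFull (d : ℕ) : Submodule ℂ (Matrix (Fin d) (Fin d) ℂ) where
  carrier := {S | Sᵀ = S}
  add_mem' := by
    rintro S T hS hT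
    simp only [Set.mem_setOf_eq] at *
    rw [Matrix.transpose_add, hS, hT]
  zero_mem' := Matrix.transpose_zero
  smul_mem' := by
    rintro c S hS
    simp only [Set.mem_setOf_eq] at *
    rw [Matrix.transpose_smul, hS]

/-- Linear equivalence between symmetric matrices and functions on `{(i,j) : i ≤ j}`. -/
lemma finrank_symFull (d : ℕ) : 2 * finrank ℂ (symFull d) = d * (d + 1) := by
  have e : symFull d ≃ₗ[ℂ] ({p : Fin d × Fin d // p.1 ≤ p.2} → ℂ) := by
    refine LinearEquiv.ofLinear
      { toFun := fun S p => S.val p.val.1 p.val.2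
        map_add' := fun _ _ => rfl
        map_smul' := fun _ _ => rfl }
      { toFun := fun f => ⟨Matrix.of fun i j =>
          if h : i ≤ j then f ⟨(i, j), h⟩ else f ⟨(j, i), le_of_not_ge h⟩, ?_⟩
        map_add' := fun f g => ?_
        map_smul' := fun c f => ?_ } ?_ ?_
    · ext i j
      simp only [Matrix.transpose_apply, Matrix.of_apply]
      rcases le_or_gt i j with h | h
      · rcases eq_or_lt_of_le h with rfl | h'
        · rfl
        · rw [dif_neg (not_le_of_gt h'), dif_pos h]
      · rw [dif_pos h.le, dif_neg (not_le_of_gt h)]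
    · apply Subtype.ext
      ext i j
      by_cases h : i ≤ j <;> simp [h]
    · apply Subtype.ext
      ext i j
      by_cases h : i ≤ j <;> simp [h]
    · refine LinearMap.ext fun f => funext fun p => ?_
      obtain ⟨⟨i, j⟩, h⟩ := p
      show (if h : i ≤ j then f ⟨(i, j), h⟩ else f ⟨(j, i), le_of_not_ge h⟩) = _
      exact dif_pos h
    · ext S i j
      obtain ⟨S, hS⟩ := S
      simp only [LinearMap.coe_comp, Function.comp_apply, LinearMap.coe_mk, AddHom.coe_mk,
        LinearMap.id_coe, id_eq]
      by_cases h : i ≤ j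
      · simp [h]; rfl
      · simp only [Matrix.of_apply, dif_neg h]
        exact congrFun (congrFun hS i) j
  rw [e.finrank_eq, Module.finrank_pi]
  exact card_le_pairs d

/-- Symmetric matrices `S` with `Q * S = 0`. -/
def symKer {ρ : Type*} [Fintype ρ] (Q : Matrix ρ (Fin n) ℂ) :
    Submodule ℂ (Matrix (Fin n) (Fin n) ℂ) where
  carrier := {S | Sᵀ = S ∧ Q * S = 0}
  add_mem' := by
    rintro S T ⟨hS1, hS2⟩ ⟨hT1, hT2⟩
    exact ⟨by rw [Matrix.transpose_add, hS1, hT1],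
      by rw [Matrix.mul_add, hS2, hT2, add_zero]⟩
  zero_mem' := ⟨Matrix.transpose_zero, Matrix.mul_zero _⟩
  smul_mem' := by
    rintro c S ⟨hS1, hS2⟩
    exact ⟨by rw [Matrix.transpose_smul, hS1],
      by rw [Matrix.mul_smul, hS2, smul_zero]⟩

lemma finrank_symKer {ρ : Type*} [Fintype ρ] [DecidableEq ρ] (Q : Matrix ρ (Fin n) ℂ) :
    2 * finrank ℂ (symKer Q) =
      (finrank ℂ (LinearMap.ker Q.mulVecLin)) * (finrank ℂ (LinearMap.ker Q.mulVecLin) + 1) := by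
  classical
  set K := LinearMap.ker Q.mulVecLin with hK
  set d := finrank ℂ K with hd
  let b : Basis (Fin d) ℂ K := Module.finBasis ℂ K
  let B : Matrix (Fin n) (Fin d) ℂ := Matrix.of fun i j => (b j : Fin n → ℂ) i
  have hQB : Q * B = 0 := by
    ext r j
    have hb : Q.mulVecLin (b j : Fin n → ℂ) = 0 := (b j).2
    have : (Q *ᵥ (b j : Fin n → ℂ)) r = 0 := by rw [← Matrix.mulVecLin_apply, hb]; rfl
    simpa [Matrix.mul_apply, Matrix.mulVec, dotProduct, B] using this
  have hBv : ∀ x : Fin d → ℂ, B *ᵥ x = ∑ j, x j • (b j : Fin n → ℂ) := by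
    intro x
    funext i
    simp only [Matrix.mulVec, dotProduct, Finset.sum_apply, Pi.smul_apply, smul_eq_mul, B,
      Matrix.of_apply]
    exact Finset.sum_congr rfl fun j _ => mul_comm _ _
  have hBinj : ∀ x : Fin d → ℂ, B *ᵥ x = 0 → x = 0 := by
    intro x hx
    rw [hBv] at hx
    have hx' : (((∑ j, x j • b j : K)) : Fin n → ℂ) = 0 := by
      push_cast
      simpa using hx
    have hx'' : (∑ j, x j • b j : K) = 0 := Subtype.ext hx'
    have := Fintype.linearIndependent_iff.mp b.linearIndependent x hx''
    funext j; exact this j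
  have hBmulinj : ∀ {κ : Type} [Fintype κ], ∀ X : Matrix (Fin d) κ ℂ, B * X = 0 → X = 0 := by
    intro κ _ X hX
    ext i j
    have : B *ᵥ (fun k => X k j) = 0 := by
      funext r
      have := congrFun (congrFun hX r) j
      simpa [Matrix.mul_apply, Matrix.mulVec, dotProduct] using this
    have := hBinj _ this
    exact congrFun this i
  -- a left inverse of B
  have hkerB : LinearMap.ker B.mulVecLin = ⊥ := by
    rw [LinearMap.ker_eq_bot']
    intro x hx
    exact hBinj x (by simpa [Matrix.mulVecLin_apply] using hx)
  obtain ⟨g, hg⟩ := LinearMap.exists_leftInverse_of_injective B.mulVecLin hkerB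
  set Bp : Matrix (Fin d) (Fin n) ℂ := LinearMap.toMatrix' g with hBp
  have hBpB : Bp * B = 1 := by
    have h1 : LinearMap.toMatrix' (g ∘ₗ B.mulVecLin) = Bp * LinearMap.toMatrix' B.mulVecLin :=
      LinearMap.toMatrix'_comp g B.mulVecLin
    have h2 : LinearMap.toMatrix' B.mulVecLin = B := by
      ext i j
      rw [LinearMap.toMatrix'_apply]
      simp [Matrix.mulVecLin_apply, Matrix.mulVec, dotProduct, mul_ite, mul_one, Pi.single_apply,
        mul_zero]
    rw [hg] at h1
    rw [h2] at h1
    simpa using h1.symm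
  -- the linear equivalence
  let Φ : symFull d →ₗ[ℂ] symKer Q :=
    { toFun := fun T => ⟨B * T.val * Bᵀ, by
        constructor
        · rw [Matrix.transpose_mul, Matrix.transpose_mul, Matrix.transpose_transpose,
            ← Matrix.mul_assoc]
          rw [T.2]
        · rw [← Matrix.mul_assoc, ← Matrix.mul_assoc, hQB, Matrix.zero_mul, Matrix.zero_mul]⟩
      map_add' := fun T T' => by
        apply Subtype.ext
        simp [Matrix.mul_add, Matrix.add_mul]
      map_smul' := fun c T => by
        apply Subtype.ext
        simp [Matrix.mul_smul, Matrix.smul_mul] }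
  have hΦinj : Function.Injective Φ := by
    rw [injective_iff_map_eq_zero]
    intro T hT
    have hT' : B * (T.val * Bᵀ) = 0 := by
      have := congrArg Subtype.val hT
      simpa [Φ, Matrix.mul_assoc] using this
    have h1 : T.val * Bᵀ = 0 := hBmulinj _ hT'
    have h2 : B * T.valᵀ = 0 := by
      have := congrArg Matrix.transpose h1
      simpa [Matrix.transpose_mul] using this
    rw [T.2] at h2
    exact Subtype.ext (hBmulinj _ h2)
  have hΦsurj : Function.Surjective Φ := by
    rintro ⟨S, hS1, hS2⟩
    -- each column of S lies in K, hence S = B * C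
    have hcol : ∀ j, (fun i => S i j) ∈ K := by
      intro j
      rw [hK, LinearMap.mem_ker]
      funext r
      have := congrFun (congrFun hS2 r) j
      simpa [Matrix.mulVecLin_apply, Matrix.mul_apply, Matrix.mulVec, dotProduct]
        using this
    have hrange : ∀ j, ∃ c : Fin d → ℂ, B *ᵥ c = fun i => S i j := by
      intro j
      refine ⟨b.repr ⟨fun i => S i j, hcol j⟩, ?_⟩
      rw [hBv]
      have hsum := congrArg (Subtype.val) (b.sum_repr ⟨fun i => S i j, hcol j⟩)
      push_cast at hsum
      simpa using hsum
    choose c hc using hrange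
    let C : Matrix (Fin d) (Fin n) ℂ := Matrix.of fun k j => c j k
    have hBC : B * C = S := by
      ext i j
      have := congrFun (hc j) i
      simpa [Matrix.mul_apply, Matrix.mulVec, dotProduct, C] using this
    have hBBS : B * Bp * S = S := by
      rw [← hBC, ← Matrix.mul_assoc, Matrix.mul_assoc B Bp B, hBpB, Matrix.mul_one]
    refine ⟨⟨Bp * S * Bpᵀ, ?_⟩, ?_⟩
    · show (Bp * S * Bpᵀ)ᵀ = Bp * S * Bpᵀ
      rw [Matrix.transpose_mul, Matrix.transpose_mul, Matrix.transpose_transpose, hS1,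
        ← Matrix.mul_assoc]
    · apply Subtype.ext
      show B * (Bp * S * Bpᵀ) * Bᵀ = S
      have h4 : B * (Bp * S * Bpᵀ) * Bᵀ = (B * Bp * S) * (B * Bp)ᵀ := by
        rw [Matrix.transpose_mul]
        rw [← Matrix.mul_assoc, ← Matrix.mul_assoc, ← Matrix.mul_assoc]
      rw [h4, hBBS]
      have h6 : (B * Bp) * Sᵀ = Sᵀ := by rw [hS1]; exact hBBS
      calc S * (B * Bp)ᵀ = (Sᵀ)ᵀ * (B * Bp)ᵀ := by rw [Matrix.transpose_transpose]
        _ = ((B * Bp) * Sᵀ)ᵀ := (Matrix.transpose_mul _ _).symm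
        _ = (Sᵀ)ᵀ := by rw [h6]
        _ = S := Matrix.transpose_transpose S
  let e : symFull d ≃ₗ[ℂ] symKer Q := LinearEquiv.ofBijective Φ ⟨hΦinj, hΦsurj⟩
  rw [← e.finrank_eq]
  exact finrank_symFull d

/-- The matrix `Q` whose rows are the measurement vectors plus a row of ones. -/
def Qm {n τ : ℕ} (v : Fin τ → Fin n → ℂ) : Matrix (Fin τ ⊕ Unit) (Fin n) ℂ :=
  Matrix.of fun r j => Sum.elim (fun k => v k j) (fun _ => 1) r

lemma det_map_ne_zero_of_rat {ι κ : Type*} [Fintype ι] [Fintype κ] [DecidableEq κ]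
    (Mp : Matrix κ κ (MvPolynomial ι ℚ)) (φ : MvPolynomial ι ℚ →ₐ[ℚ] ℂ)
    (hφ : Function.Injective φ) (σ : ι → ℚ)
    (h : (Mp.map ⇑(MvPolynomial.aeval σ)).det ≠ 0) : (Mp.map ⇑φ).det ≠ 0 := by
  have h1 : Mp.det ≠ 0 := by
    intro h0
    exact h (by rw [← AlgHom.mapMatrix_apply, ← AlgHom.map_det, h0, map_zero])
  rw [← AlgHom.mapMatrix_apply, ← AlgHom.map_det]
  exact fun h' => h1 (hφ (h'.trans (map_zero φ).symm))

lemma rank_Qm {n τ : ℕ} (hτ : 1 ≤ τ) (hn : τ ≤ n) (v : Fin τ → Fin n → ℂ)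
    (hgen : AlgebraicIndependent ℚ (fun p : Fin τ × Fin n => v p.1 p.2)) :
    (Qm v).rank = min (τ + 1) n := by
  classical
  have hφ : Function.Injective
      ⇑(MvPolynomial.aeval (R := ℚ) (fun p : Fin τ × Fin n => v p.1 p.2)) :=
    algebraicIndependent_iff_injective_aeval.mp hgen
  rcases lt_or_eq_of_le hn with hlt | heq
  · -- τ < n
    have hmin : min (τ + 1) n = τ + 1 := min_eq_left hlt
    set g : Fin τ ⊕ Unit → Fin n := Sum.elim (fun k => ⟨k.val, k.isLt.trans hlt⟩)
      (fun _ => ⟨τ, hlt⟩) with hg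
    set E : Matrix (Fin n) (Fin τ ⊕ Unit) ℂ := Matrix.of fun j c => if j = g c then 1 else 0
      with hE
    have hQE : Qm v * E =
        Matrix.of fun r c => Sum.elim (fun k => v k (g c)) (fun _ => (1 : ℂ)) r := by
      ext r c
      simp only [Matrix.mul_apply, hE, Matrix.of_apply, mul_ite, mul_one, mul_zero]
      rw [Finset.sum_ite_eq' Finset.univ (g c) (fun j => Qm v r j)]
      cases r <;> simp [Qm]
    set Mp : Matrix (Fin τ ⊕ Unit) (Fin τ ⊕ Unit) (MvPolynomial (Fin τ × Fin n) ℚ) :=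
      Matrix.of fun r c => Sum.elim (fun k => MvPolynomial.X (k, g c)) (fun _ => 1) r with hMp
    have hmap : Mp.map ⇑(MvPolynomial.aeval (R := ℚ) fun p : Fin τ × Fin n => v p.1 p.2)
        = Qm v * E := by
      rw [hQE]; ext r c; cases r <;> simp [hMp]
    set σ : Fin τ × Fin n → ℚ := fun p => if (p.1 : ℕ) = (p.2 : ℕ) then 1 else 0 with hσdef
    have hσ : Mp.map ⇑(MvPolynomial.aeval σ) =
        Matrix.fromBlocks (1 : Matrix (Fin τ) (Fin τ) ℚ) 0 (Matrix.of fun _ _ => 1)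
          (1 : Matrix Unit Unit ℚ) := by
      ext r c
      cases r with
      | inl k =>
        cases c with
        | inl k' =>
          simp [hMp, hσdef, hg, Matrix.one_apply, Fin.ext_iff]
        | inr u =>
          have : (k : ℕ) ≠ τ := Nat.ne_of_lt k.isLt
          simp [hMp, hσdef, hg, this]
      | inr u => cases c <;> simp [hMp, Matrix.one_apply]
    have hdet : (Mp.map ⇑(MvPolynomial.aeval σ)).det ≠ 0 := by
      rw [hσ, Matrix.det_fromBlocks_zero₁₂]
      simp
    have hdet2 : (Qm v * E).det ≠ 0 := by
      rw [← hmap]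
      exact det_map_ne_zero_of_rat Mp _ hφ σ hdet
    have hunit : IsUnit (Qm v * E) :=
      (Matrix.isUnit_iff_isUnit_det _).mpr (isUnit_iff_ne_zero.mpr hdet2)
    have h1 : (Qm v * E).rank = τ + 1 := by
      rw [Matrix.rank_of_isUnit _ hunit]
      simp
    have h2 : (Qm v).rank ≤ τ + 1 := by
      have := Matrix.rank_le_card_height (Qm v)
      simpa using this
    have h3 : τ + 1 ≤ (Qm v).rank := by
      have := Matrix.rank_mul_le_left (Qm v) E
      rw [h1] at this
      exact this
    omega
  · -- τ = n
    subst heq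
    have hmin : min (τ + 1) τ = τ := by omega
    set E2 : Matrix (Fin τ) (Fin τ ⊕ Unit) ℂ :=
      Matrix.of fun k r => if r = Sum.inl k then 1 else 0 with hE2
    have hE2Q : E2 * Qm v = Matrix.of fun k j => v k j := by
      ext k j
      simp only [Matrix.mul_apply, hE2, Matrix.of_apply, ite_mul, one_mul, zero_mul]
      rw [Finset.sum_ite_eq' Finset.univ (Sum.inl k) (fun r => Qm v r j)]
      simp [Qm]
    set Mp2 : Matrix (Fin τ) (Fin τ) (MvPolynomial (Fin τ × Fin τ) ℚ) :=
      Matrix.of fun k j => MvPolynomial.X (k, j) with hMp2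
    have hmap2 : Mp2.map ⇑(MvPolynomial.aeval (R := ℚ) fun p : Fin τ × Fin τ => v p.1 p.2)
        = E2 * Qm v := by
      rw [hE2Q]; ext k j; simp [hMp2]
    set σ2 : Fin τ × Fin τ → ℚ := fun p => if p.1 = p.2 then 1 else 0 with hσ2
    have hdet : (Mp2.map ⇑(MvPolynomial.aeval σ2)).det ≠ 0 := by
      have : Mp2.map ⇑(MvPolynomial.aeval σ2) = 1 := by
        ext k j
        simp [hMp2, hσ2, Matrix.one_apply]
      rw [this]
      simp
    have hdet2 : (E2 * Qm v).det ≠ 0 := by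
      rw [← hmap2]
      exact det_map_ne_zero_of_rat Mp2 _ hφ σ2 hdet
    have hunit : IsUnit (E2 * Qm v) :=
      (Matrix.isUnit_iff_isUnit_det _).mpr (isUnit_iff_ne_zero.mpr hdet2)
    have h1 : (E2 * Qm v).rank = τ := by
      rw [Matrix.rank_of_isUnit _ hunit]
      simp
    have h2 : (Qm v).rank ≤ τ := by
      have := Matrix.rank_le_card_width (Qm v)
      simpa using this
    have h3 : τ ≤ (Qm v).rank := by
      have := Matrix.rank_mul_le_right E2 (Qm v)
      rw [h1] at this
      exact this
    omega

lemma astack_entry {τ : ℕ} (v : Fin τ → Fin n → ℂ) (k : Fin τ) (i : Fin n) (l : CEdge n) :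
    Astack v (k, i) l = ev l i * (v k l.val.1 - v k l.val.2) := by
  show Atilde (v k) i l = _
  rw [Atilde, Matrix.mul_diagonal]
  have hd : ((incid ℂ n)ᵀ *ᵥ v k) l = v k l.val.1 - v k l.val.2 := by
    rw [← sum_ev_mul l (v k)]
    simp [Matrix.mulVec, dotProduct, Matrix.transpose_apply, incid, ev]
  rw [hd]
  rfl

lemma finrank_U_le : finrank ℂ (U n) ≤ Fintype.card (CEdge n) := by
  classical
  let π : U n →ₗ[ℂ] (CEdge n → ℂ) :=
    { toFun := fun S l => S.val l.val.1 l.val.2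
      map_add' := fun _ _ => rfl
      map_smul' := fun _ _ => rfl }
  have hinj : Function.Injective π := by
    rw [injective_iff_map_eq_zero]
    rintro ⟨S, hS1, hS2⟩ hS
    apply Subtype.ext
    show S = 0
    have hoff : ∀ a b : Fin n, a < b → S a b = 0 := fun a b h => congrFun hS ⟨(a, b), h⟩
    have hsym : ∀ i j, S j i = S i j := by
      intro i j
      have := congrFun (congrFun hS1 i) j
      simpa using this
    have hoffall : ∀ i j : Fin n, i ≠ j → S i j = 0 := by
      intro i j hij
      rcases lt_or_gt_of_ne hij with h | h
      · exact hoff i j h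
      · rw [← hsym i j]
        exact hoff j i h
    ext i j
    by_cases hij : i = j
    · subst hij
      have h0 := congrFun hS2 i
      simp only [Matrix.mulVec, dotProduct, mul_one, Pi.zero_apply] at h0
      rw [Finset.sum_eq_single i] at h0
      · simpa using h0
      · intro b _ hb
        exact hoffall i b (fun h => hb h.symm)
      · simp
    · simp [hoffall i j hij]
  calc finrank ℂ (U n) ≤ finrank ℂ (CEdge n → ℂ) :=
        LinearMap.finrank_le_finrank_of_injective hinj
    _ = Fintype.card (CEdge n) := Module.finrank_pi ℂ

end

end Stmt8Aux

set_option maxHeartbeats 1000000 in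
open Stmt8Aux Module Submodule in
/-- with `n ≥ τ ≥ 1` generic complex measurements, the stacked voltage
coefficient matrix `A(v) ∈ ℂ^{nτ×e}` has rank `nτ − τ(τ+1)/2` over `ℂ`. -/
theorem stmt8 (n τ : ℕ) (hτ : 1 ≤ τ) (hn : τ ≤ n) (v : Fin τ → Fin n → ℂ)
    (hgen : AlgebraicIndependent ℚ (fun p : Fin τ × Fin n => v p.1 p.2)) :
    (Astack v).rank = n * τ - τ * (τ + 1) / 2 := by
  classical
  set P : Matrix (Fin τ) (Fin n) ℂ := Matrix.of fun k i => v k i with hP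
  set Lmul : Matrix (Fin n) (Fin n) ℂ →ₗ[ℂ] Matrix (Fin τ) (Fin n) ℂ :=
    { toFun := fun S => P * S
      map_add' := fun S T => Matrix.mul_add P S T
      map_smul' := fun c S => Matrix.mul_smul P c S } with hLmul
  set W : Submodule ℂ (Matrix (Fin n) (Fin n) ℂ) := Submodule.span ℂ (Set.range Msym) with hW
  set μ : Matrix (Fin τ) (Fin n) ℂ ≃ₗ[ℂ] (Fin τ × Fin n → ℂ) :=
    { toFun := fun M p => M p.1 p.2
      invFun := fun f => Matrix.of fun k i => f (k, i)
      map_add' := fun _ _ => rfl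
      map_smul' := fun _ _ => rfl
      left_inv := fun _ => rfl
      right_inv := fun _ => rfl } with hμ
  -- columns of `Astack v` are `P * Msym l`
  have hcol : (Astack v)ᵀ = ⇑μ ∘ (⇑Lmul ∘ Msym) := by
    funext l
    show (Astack v)ᵀ l = μ (P * Msym l)
    funext p
    obtain ⟨k, i⟩ := p
    show (Astack v)ᵀ l (k, i) = (P * Msym l) k i
    rw [Matrix.transpose_apply, astack_entry, Matrix.mul_apply]
    have hterm : ∀ j, P k j * Msym l j i = ev l i * (ev l j * v k j) := by
      intro j; simp only [Msym, Matrix.of_apply, hP]; ring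
    rw [Finset.sum_congr rfl fun j _ => hterm j, ← Finset.mul_sum, sum_ev_mul l (v k)]
  -- rank as the dimension of the image of W
  have hrank : (Astack v).rank = finrank ℂ (Submodule.map Lmul W) := by
    rw [Matrix.rank_eq_finrank_span_cols, show (Astack v).col = (Astack v)ᵀ from rfl, hcol, Set.range_comp,
      ← LinearEquiv.coe_coe, ← Submodule.map_span]
    have hcast : Submodule.map (μ : Matrix (Fin τ) (Fin n) ℂ →ₗ[ℂ] (Fin τ × Fin n → ℂ)) (span ℂ (Set.range (⇑Lmul ∘ Msym)))
        = Submodule.map (μ : Matrix (Fin τ) (Fin n) ℂ →ₗ[ℂ] (Fin τ × Fin n → ℂ))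
            (span ℂ (Set.range (⇑Lmul ∘ Msym))) := rfl
    rw [hcast, LinearEquiv.finrank_map_eq, Set.range_comp, ← Submodule.map_span, hW]
  -- rank-nullity for the restriction of Lmul to W
  set f : W →ₗ[ℂ] Matrix (Fin τ) (Fin n) ℂ := Lmul ∘ₗ W.subtype with hf
  have hrangef : LinearMap.range f = Submodule.map Lmul W := by
    rw [hf, LinearMap.range_comp, Submodule.range_subtype]
  have hkerf : finrank ℂ (LinearMap.ker f) = finrank ℂ ↥(W ⊓ LinearMap.ker Lmul) := by
    have h1 : LinearMap.ker f = Submodule.comap W.subtype (W ⊓ LinearMap.ker Lmul) := by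
      ext x
      simp only [hf, LinearMap.ker_comp, Submodule.mem_comap, Submodule.mem_inf,
        Submodule.coe_subtype]
      exact ⟨fun h => ⟨x.2, h⟩, fun h => h.2⟩
    rw [h1]
    exact (Submodule.comapSubtypeEquivOfLe inf_le_left).finrank_eq
  have hrn := LinearMap.finrank_range_add_finrank_ker f
  rw [hrangef, hkerf] at hrn
  -- dimension of W
  have hWcard : finrank ℂ W = Fintype.card (CEdge n) := finrank_span_eq_card msym_li
  -- W = U
  have hWU : W = U n := by
    apply Submodule.eq_of_le_of_finrank_le
    · rw [hW, Submodule.span_le]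
      rintro x ⟨l, rfl⟩
      exact msym_mem_U l
    · rw [hWcard]
      exact finrank_U_le
  -- the intersection is symKer (Qm v)
  have hsymQ : ∀ S : Matrix (Fin n) (Fin n) ℂ, Sᵀ = S →
      ∀ i j, S j i = S i j := by
    intro S hS1 i j
    have := congrFun (congrFun hS1 i) j
    simpa using this
  have hker : W ⊓ LinearMap.ker Lmul = symKer (Qm v) := by
    rw [hWU]
    ext S
    simp only [Submodule.mem_inf, LinearMap.mem_ker]
    constructor
    · rintro ⟨⟨hS1, hS2⟩, hS3⟩
      have hS3' : P * S = 0 := hS3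
      refine ⟨hS1, ?_⟩
      ext r j
      cases r with
      | inl k =>
        have := congrFun (congrFun hS3' k) j
        simpa [Qm, Matrix.mul_apply, hP] using this
      | inr u =>
        have h0 := congrFun hS2 j
        simp only [Matrix.mulVec, dotProduct, mul_one, Pi.zero_apply] at h0
        show (Qm v * S) (Sum.inr u) j = (0 : Matrix (Fin τ ⊕ Unit) (Fin n) ℂ) (Sum.inr u) j
        rw [Matrix.mul_apply, Matrix.zero_apply]
        rw [Finset.sum_congr rfl fun i _ =>
          (by rw [show Qm v (Sum.inr u) i = 1 from rfl, one_mul] :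
            Qm v (Sum.inr u) i * S i j = S i j)]
        rw [Finset.sum_congr rfl fun i _ => (hsymQ S hS1 i j).symm]
        exact h0
    · rintro ⟨hS1, hS2⟩
      refine ⟨⟨hS1, ?_⟩, ?_⟩
      · funext j
        have h0 := congrFun (congrFun hS2 (Sum.inr ())) j
        rw [Matrix.mul_apply, Matrix.zero_apply] at h0
        simp only [Matrix.mulVec, dotProduct, mul_one, Pi.zero_apply]
        rw [Finset.sum_congr rfl fun i _ =>
          (by rw [show Qm v (Sum.inr ()) i = 1 from rfl, one_mul] :
            Qm v (Sum.inr ()) i * S i j = S i j)] at h0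
        rw [Finset.sum_congr rfl fun i _ => hsymQ S hS1 i j]
        exact h0
      · show P * S = 0
        ext k j
        have := congrFun (congrFun hS2 (Sum.inl k)) j
        simpa [Qm, Matrix.mul_apply, hP] using this
  -- dimension count for the kernel of Q
  set d := finrank ℂ (LinearMap.ker (Qm v).mulVecLin) with hd
  have hsym2 := finrank_symKer (Qm v)
  rw [← hd] at hsym2
  have hrkQ := rank_Qm hτ hn v hgen
  have hdQ : (Qm v).rank + d = n := by
    have h1 := LinearMap.finrank_range_add_finrank_ker (Qm v).mulVecLin
    rw [Module.finrank_pi, Fintype.card_fin] at h1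
    exact h1
  -- put everything together
  rw [hrank]
  rw [hker] at hrn
  rw [hWcard] at hrn
  have hedge := card_cedge n
  have heven : 2 * (τ * (τ + 1) / 2) = τ * (τ + 1) := by
    have h2 : 2 ∣ τ * (τ + 1) := (Nat.even_mul_succ_self τ).two_dvd
    omega
  rcases lt_or_eq_of_le hn with hlt | heq
  · -- τ < n
    have hmin : min (τ + 1) n = τ + 1 := min_eq_left hlt
    rw [hmin] at hrkQ
    obtain ⟨q, hq⟩ : ∃ q, n = τ + 1 + q := ⟨n - τ - 1, by omega⟩
    have hqd : d = q := by omega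
    have hprod : n * (n - 1) = q * (q + 1) + τ * (τ + 1) + 2 * (τ * q) := by
      rw [hq]
      have h2 : τ + 1 + q - 1 = τ + q := by omega
      rw [h2]
      ring
    have hgoalprod : n * τ = τ * (τ + 1) + τ * q := by
      rw [hq]; ring
    rw [hqd] at hsym2
    omega
  · -- τ = n
    have hmin : min (τ + 1) n = n := by omega
    rw [hmin] at hrkQ
    have hd0 : d = 0 := by omega
    rw [hd0] at hsym2
    have hprod : n * (n + 1) = n * (n - 1) + 2 * n := by
      obtain ⟨p, hp⟩ : ∃ p, n = p + 1 := ⟨n - 1, by omega⟩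
      rw [hp]
      have h2 : p + 1 - 1 = p := by omega
      rw [h2]
      ring
    have hnn : 2 * (n * n) = n * (n - 1) + n * (n + 1) := by
      obtain ⟨p, hp⟩ : ∃ p, n = p + 1 := ⟨n - 1, by omega⟩
      rw [hp]
      have h2 : p + 1 - 1 = p := by omega
      rw [h2]
      ring
    have hgoal : n * τ = n * n := by rw [heq]
    have heq2 : τ * (τ + 1) = n * (n + 1) := by rw [heq]
    omega
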